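/- Let G₁, G₂ be topological groups, and suppose for i = 1,2 there exist N_i ∈ ℕ such that for every identity neighborhood U_i ⊆ G_i there are h ∈ U_i^{N_i} making (g_1,…,g_{N_i}) ↦ [g_1,h_1]⋯[g_{N_i},h_{N_i}] locally right-invertible near e by a continuous map sending e to (e,…,e). Then the product group G₁ × G₂ satisfies the same property with N ≤ N₁ + N₂. -/

import Mathlib

open Topology
open scoped commutatorElement

/-- The local-commutator-decomposition property of a topological group: for every identity
neighborhood `U` there are `h₁,…,h_N ∈ U` such that
`(g₁,…,g_N) ↦ [g₁,h₁]⋯[g_N,h_N]` has a continuous local right inverse near `e`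
sending `e` to `(e,…,e)`. -/
def LocallySmoothlyPerfect (G : Type*) [Group G] [TopologicalSpace G] (N : ℕ) : Prop :=
  ∀ U ∈ 𝓝 (1 : G), ∃ h : Fin N → G, (∀ i, h i ∈ U) ∧
    ∃ V ∈ 𝓝 (1 : G), ∃ S : G → (Fin N → G),
      ContinuousOn S V ∧ S 1 = (fun _ => 1) ∧
      ∀ g ∈ V, (List.ofFn fun i => ⁅S g i, h i⁆).prod = g

/-- If `G₁` and `G₂` are topological groups having the local commutator decomposition
property with `N₁` and `N₂` commutators respectively, then the product group `G₁ × G₂`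
has it with `N₁ + N₂` commutators. -/
theorem stmt_19 (G₁ G₂ : Type*) [Group G₁] [TopologicalSpace G₁] [IsTopologicalGroup G₁]
    [Group G₂] [TopologicalSpace G₂] [IsTopologicalGroup G₂] (N₁ N₂ : ℕ)
    (h₁ : LocallySmoothlyPerfect G₁ N₁) (h₂ : LocallySmoothlyPerfect G₂ N₂) :
    LocallySmoothlyPerfect (G₁ × G₂) (N₁ + N₂) := by
  intro U hU
  have hU₁ : (fun x : G₁ => ((x, 1) : G₁ × G₂)) ⁻¹' U ∈ 𝓝 (1 : G₁) := by
    have : Continuous fun x : G₁ => ((x, 1) : G₁ × G₂) := by continuity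
    exact this.continuousAt.preimage_mem_nhds (by exact hU)
  have hU₂ : (fun y : G₂ => ((1, y) : G₁ × G₂)) ⁻¹' U ∈ 𝓝 (1 : G₂) := by
    have : Continuous fun y : G₂ => ((1, y) : G₁ × G₂) := by continuity
    exact this.continuousAt.preimage_mem_nhds (by exact hU)
  obtain ⟨a, ha, V₁, hV₁, S₁, hS₁c, hS₁1, hS₁⟩ := h₁ _ hU₁
  obtain ⟨b, hb, V₂, hV₂, S₂, hS₂c, hS₂1, hS₂⟩ := h₂ _ hU₂
  refine ⟨Fin.append (fun i => ((a i, 1) : G₁ × G₂)) (fun j => ((1, b j) : G₁ × G₂)),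
    ?_, V₁ ×ˢ V₂, prod_mem_nhds hV₁ hV₂,
    fun g => Fin.append (fun i => ((S₁ g.1 i, 1) : G₁ × G₂))
      (fun j => ((1, S₂ g.2 j) : G₁ × G₂)), ?_, ?_, ?_⟩
  · intro i
    refine Fin.addCases (fun i => ?_) (fun j => ?_) i
    · simpa [Fin.append_left] using ha i
    · simpa [Fin.append_right] using hb j
  · rw [continuousOn_pi]
    intro i
    refine Fin.addCases (fun i => ?_) (fun j => ?_) i
    · simp only [Fin.append_left]
      have : ContinuousOn (fun g : G₁ × G₂ => S₁ g.1 i) (V₁ ×ˢ V₂) := by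
        have := (continuousOn_pi.mp hS₁c i)
        exact this.comp continuous_fst.continuousOn (fun x hx => hx.1)
      exact this.prodMk continuousOn_const
    · simp only [Fin.append_right]
      have : ContinuousOn (fun g : G₁ × G₂ => S₂ g.2 j) (V₁ ×ˢ V₂) := by
        have := (continuousOn_pi.mp hS₂c j)
        exact this.comp continuous_snd.continuousOn (fun x hx => hx.2)
      exact continuousOn_const.prodMk this
  · funext i
    refine Fin.addCases (fun i => ?_) (fun j => ?_) i
    · simp [Fin.append_left, Prod.fst_one, Prod.snd_one, congrFun hS₁1 i]
    · simp [Fin.append_right, Prod.fst_one, Prod.snd_one, congrFun hS₂1 j]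
  · rintro ⟨g₁, g₂⟩ ⟨hg₁, hg₂⟩
    have key : (fun i : Fin (N₁ + N₂) =>
        ⁅Fin.append (fun i => ((S₁ g₁ i, 1) : G₁ × G₂)) (fun j => ((1, S₂ g₂ j) : G₁ × G₂)) i,
         Fin.append (fun i => ((a i, 1) : G₁ × G₂)) (fun j => ((1, b j) : G₁ × G₂)) i⁆)
        = Fin.append (fun i => ((⁅S₁ g₁ i, a i⁆, 1) : G₁ × G₂))
            (fun j => ((1, ⁅S₂ g₂ j, b j⁆) : G₁ × G₂)) := by
      funext i
      refine Fin.addCases (fun i => ?_) (fun j => ?_) i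
      · simp [Fin.append_left, commutatorElement_def, Prod.ext_iff]
      · simp [Fin.append_right, commutatorElement_def, Prod.ext_iff]
    rw [key, List.ofFn_fin_append, List.prod_append]
    have split : ∀ l : List (G₁ × G₂), l.prod = ((l.map Prod.fst).prod, (l.map Prod.snd).prod) := by
      intro l
      induction l with
      | nil => simp [Prod.ext_iff]
      | cons x xs ih => simp [ih, Prod.ext_iff]
    have p1 : (List.ofFn fun i => ((⁅S₁ g₁ i, a i⁆, 1) : G₁ × G₂)).prod
        = (((List.ofFn fun i => ⁅S₁ g₁ i, a i⁆).prod, 1) : G₁ × G₂) := by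
      rw [split]; simp [List.map_ofFn, Function.comp_def, List.ofFn_const]
    have p2 : (List.ofFn fun j => ((1, ⁅S₂ g₂ j, b j⁆) : G₁ × G₂)).prod
        = ((1, (List.ofFn fun j => ⁅S₂ g₂ j, b j⁆).prod) : G₁ × G₂) := by
      rw [split]; simp [List.map_ofFn, Function.comp_def, List.ofFn_const]
    rw [p1, p2, hS₁ g₁ hg₁, hS₂ g₂ hg₂]
    simp [Prod.ext_iff]
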